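/- (Completeness of proof traces for provability in Horn PCL) For a Horn PCL theory Δ and atom a: Δ ⊢ a in PCL natural deduction if and only if a occurs in some proof trace of Δ, i.e., a ∈ ⋃{atoms(σ) : σ ∈ ⟦Δ⟧}. -/

import Mathlib

/-- Formulae of Propositional Contract Logic over atoms `A`. -/
inductive PCLForm (A : Type) : Type
  | atom : A → PCLForm A
  | top  : PCLForm A
  | and  : PCLForm A → PCLForm A → PCLForm A
  | imp  : PCLForm A → PCLForm A → PCLForm A
  | cimp : PCLForm A → PCLForm A → PCLForm A

/-- Natural deduction for PCL: intuitionistic rules plus (↠I1), (↠I2), (↠E). -/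
inductive PCLProves {A : Type} : Set (PCLForm A) → PCLForm A → Prop
  | ax {Δ p} : p ∈ Δ → PCLProves Δ p
  | topI {Δ} : PCLProves Δ .top
  | andI {Δ p q} : PCLProves Δ p → PCLProves Δ q → PCLProves Δ (.and p q)
  | andE1 {Δ p q} : PCLProves Δ (.and p q) → PCLProves Δ p
  | andE2 {Δ p q} : PCLProves Δ (.and p q) → PCLProves Δ q
  | impI {Δ p q} : PCLProves (insert p Δ) q → PCLProves Δ (.imp p q)
  | impE {Δ p q} : PCLProves Δ (.imp p q) → PCLProves Δ p → PCLProves Δ q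
  | cimpI1 {Δ p q} : PCLProves Δ q → PCLProves Δ (.cimp p q)
  | cimpI2 {Δ p q p' q'} : PCLProves Δ (.cimp p' q') → PCLProves (insert p Δ) p' →
      PCLProves (insert q' Δ) (.cimp p q) → PCLProves Δ (.cimp p q)
  | cimpE {Δ p q} : PCLProves Δ (.cimp p q) → PCLProves (insert q Δ) p → PCLProves Δ q

/-- A Horn PCL clause: a set of premise atoms, a flag telling whether the
implication is contractual (↠, `ctr = true`) or intuitionistic (→, `ctr = false`),
and a head atom. An atomic fact `a` is the clause `⊤ → a`, i.e. `⟨∅, false, a⟩`. -/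
structure HornClause (A : Type) where
  prem : Finset A
  ctr : Bool
  head : A
deriving DecidableEq

/-- Remove duplicates from the right (keep the leftmost occurrence). -/
def rdedup {A : Type} [DecidableEq A] : List A → List A
  | [] => []
  | x :: l => x :: (rdedup l).filter (· ≠ x)

section RD
variable {A : Type} [DecidableEq A]

@[simp] lemma mem_rdedup {l : List A} {x : A} : x ∈ rdedup l ↔ x ∈ l := by
  induction l with
  | nil => simp [rdedup]
  | cons y l ih =>
    simp [rdedup, List.mem_filter, ih]
    by_cases h : x = y <;> simp [h]

lemma rdedup_nodup (l : List A) : (rdedup l).Nodup := by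
  induction l with
  | nil => simp [rdedup]
  | cons y l ih =>
    simp only [rdedup, List.nodup_cons]
    constructor
    · intro h; have := (List.mem_filter.1 h).2; simp at this
    · exact ih.filter _

lemma rdedup_eq_self {l : List A} (h : l.Nodup) : rdedup l = l := by
  induction l with
  | nil => rfl
  | cons y l ih =>
    simp only [rdedup, ih (List.nodup_cons.1 h).2]
    congr 1
    apply List.filter_eq_self.2
    intro x hx
    have : x ≠ y := fun e => (List.nodup_cons.1 h).1 (e ▸ hx)
    simpa using this

lemma rdedup_append (l m : List A) :
    rdedup (l ++ m) = rdedup l ++ (rdedup m).filter (fun y => !decide (y ∈ l)) := by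
  induction l with
  | nil => simp [rdedup, rdedup_eq_self (rdedup_nodup m)]
  | cons x l ih =>
    show x :: (rdedup (l ++ m)).filter (· ≠ x) = _
    rw [ih, List.filter_append, List.filter_filter]
    simp only [rdedup, List.cons_append, List.append_assoc]
    congr 2
    apply List.filter_congr
    intro y _
    by_cases h1 : y = x <;> by_cases h2 : y ∈ l <;> simp [h1, h2]

lemma rdedup_rdedup (l : List A) : rdedup (rdedup l) = rdedup l :=
  rdedup_eq_self (rdedup_nodup l)

lemma rdedup_append_right (l m : List A) : rdedup (l ++ rdedup m) = rdedup (l ++ m) := by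
  rw [rdedup_append, rdedup_append, rdedup_rdedup]

lemma rdedup_append_left (l m : List A) : rdedup (rdedup l ++ m) = rdedup (l ++ m) := by
  rw [rdedup_append, rdedup_append, rdedup_rdedup]
  congr 1
  apply List.filter_congr
  intro y _
  simp

lemma key_eq (w v : List A) (b : A) :
    rdedup (rdedup w ++ b :: (rdedup v).filter (fun y => !decide (y ∈ w)))
      = rdedup (w ++ b :: v) := by
  rw [rdedup_append_left, rdedup_append, rdedup_append]
  congr 1
  have hsub : ∀ (t : List A), (rdedup (b :: t)).filter (fun y => !decide (y ∈ w))
      = (b :: (rdedup t).filter (· ≠ b)).filter (fun y => !decide (y ∈ w)) := fun t => rfl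
  rw [hsub, hsub]
  rw [rdedup_eq_self ((rdedup_nodup v).filter _)]
  by_cases hb : b ∈ w <;>
    simp only [List.filter_cons, hb, decide_true, decide_false, Bool.not_true, Bool.not_false,
      if_true, if_false, List.filter_filter, List.cons.injEq, true_and] <;>
  · apply List.filter_congr
    intro y _
    by_cases h1 : y = b <;> by_cases h2 : y ∈ w <;> simp [h1, h2]

end RD

/-- Proof traces of a Horn PCL theory (Def. of ⟦Δ⟧):
(ε) the empty trace; (→) append the head of an intuitionistic clause whose
premises all occur in the trace; (↠) insert, at any position, the head `a` of a
contractual clause into a trace of `Δ, a` in which all the premises occur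
(duplicates removed from the right). -/
inductive Trace {A : Type} [DecidableEq A] : Set (HornClause A) → List A → Prop
  | nil {Δ} : Trace Δ []
  | imp {Δ : Set (HornClause A)} {X : Finset A} {a : A} {σ : List A} :
      (⟨X, false, a⟩ : HornClause A) ∈ Δ → Trace Δ σ → (∀ x ∈ X, x ∈ σ) →
      Trace Δ (rdedup (σ ++ [a]))
  | cimp {Δ : Set (HornClause A)} {X : Finset A} {a : A} {σ u v : List A} :
      (⟨X, true, a⟩ : HornClause A) ∈ Δ →
      Trace (insert (⟨∅, false, a⟩ : HornClause A) Δ) σ → (∀ x ∈ X, x ∈ σ) →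
      σ = u ++ v → Trace Δ (rdedup (u ++ a :: v))

/-- The conjunction of a finite set of atoms (⊤ when empty). -/
noncomputable def conjOf {A : Type} (X : Finset A) : PCLForm A :=
  X.toList.foldr (fun x f => .and (.atom x) f) .top

/-- The PCL formula corresponding to a Horn clause. -/
noncomputable def HornClause.toForm {A : Type} (c : HornClause A) : PCLForm A :=
  if c.ctr then .cimp (conjOf c.prem) (.atom c.head)
  else .imp (conjOf c.prem) (.atom c.head)

section TraceLemmas
variable {A : Type} [DecidableEq A]

lemma Trace.nodup {Δ : Set (HornClause A)} {σ : List A} (h : Trace Δ σ) : σ.Nodup := by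
  cases h with
  | nil => exact List.nodup_nil
  | imp _ _ _ => exact rdedup_nodup _
  | cimp _ _ _ _ => exact rdedup_nodup _

lemma Trace.mono {Δ Δ' : Set (HornClause A)} {σ : List A} (hΔ : Δ ⊆ Δ')
    (h : Trace Δ σ) : Trace Δ' σ := by
  induction h generalizing Δ' with
  | nil => exact Trace.nil
  | imp hc _ hX ih => exact Trace.imp (hΔ hc) (ih hΔ) hX
  | cimp hc _ hX he ih =>
      exact Trace.cimp (hΔ hc) (ih (Set.insert_subset_insert hΔ)) hX he

lemma Trace.merge {Δ : Set (HornClause A)} {σ τ : List A}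
    (hσ : Trace Δ σ) (hτ : Trace Δ τ) : Trace Δ (rdedup (σ ++ τ)) := by
  induction hτ generalizing σ with
  | nil => rw [List.append_nil, rdedup_eq_self hσ.nodup]; exact hσ
  | @imp Δ X b τ₀ hc _ hX ih =>
      have h1 := Trace.imp hc (ih hσ) (fun x hx => mem_rdedup.2 (List.mem_append_right σ (hX x hx)))
      rw [rdedup_append_left, List.append_assoc] at h1
      rwa [rdedup_append_right]
  | @cimp Δ X b τ₀ u v hc _ hX he ih =>
      have hσ' : Trace (insert (⟨∅, false, b⟩ : HornClause A) Δ) σ :=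
        hσ.mono (Set.subset_insert _ _)
      have h0 := ih hσ'
      rw [he, ← List.append_assoc, rdedup_append (σ ++ u) v] at h0
      have h1 := Trace.cimp hc h0 (fun x hx => by
        have : x ∈ u ++ v := he ▸ hX x hx
        rcases List.mem_append.1 this with h | h
        · exact List.mem_append_left _ (mem_rdedup.2 (List.mem_append_right σ h))
        · by_cases hm : x ∈ σ ++ u
          · exact List.mem_append_left _ (mem_rdedup.2 hm)
          · refine List.mem_append_right _ (List.mem_filter.2 ⟨mem_rdedup.2 h, by simpa using hm⟩)) rfl
      rw [key_eq] at h1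
      rw [rdedup_append_right, ← List.append_assoc]
      exact h1

end TraceLemmas

section PCLLemmas
variable {A : Type}

lemma PCLProves.weaken {Γ Γ' : Set (PCLForm A)} {p : PCLForm A}
    (h : PCLProves Γ p) (hs : Γ ⊆ Γ') : PCLProves Γ' p := by
  induction h generalizing Γ' with
  | ax hp => exact .ax (hs hp)
  | topI => exact .topI
  | andI _ _ ih1 ih2 => exact .andI (ih1 hs) (ih2 hs)
  | andE1 _ ih => exact .andE1 (ih hs)
  | andE2 _ ih => exact .andE2 (ih hs)
  | impI _ ih => exact .impI (ih (Set.insert_subset_insert hs))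
  | impE _ _ ih1 ih2 => exact .impE (ih1 hs) (ih2 hs)
  | cimpI1 _ ih => exact .cimpI1 (ih hs)
  | cimpI2 _ _ _ ih1 ih2 ih3 =>
      exact .cimpI2 (ih1 hs) (ih2 (Set.insert_subset_insert hs))
        (ih3 (Set.insert_subset_insert hs))
  | cimpE _ _ ih1 ih2 => exact .cimpE (ih1 hs) (ih2 (Set.insert_subset_insert hs))

lemma PCLProves.subst {Γ Γ' : Set (PCLForm A)} {p : PCLForm A}
    (h : PCLProves Γ p) (hs : ∀ r ∈ Γ, PCLProves Γ' r) : PCLProves Γ' p := by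
  induction h generalizing Γ' with
  | ax hp => exact hs _ hp
  | topI => exact .topI
  | andI _ _ ih1 ih2 => exact .andI (ih1 hs) (ih2 hs)
  | andE1 _ ih => exact .andE1 (ih hs)
  | andE2 _ ih => exact .andE2 (ih hs)
  | @impI _ q _ _ ih =>
      refine .impI (ih ?_)
      rintro r (rfl | hr)
      · exact .ax (Set.mem_insert _ _)
      · exact (hs r hr).weaken (Set.subset_insert _ _)
  | impE _ _ ih1 ih2 => exact .impE (ih1 hs) (ih2 hs)
  | cimpI1 _ ih => exact .cimpI1 (ih hs)
  | cimpI2 _ _ _ ih1 ih2 ih3 =>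
      refine .cimpI2 (ih1 hs) (ih2 ?_) (ih3 ?_) <;>
      · rintro r (rfl | hr)
        · exact .ax (Set.mem_insert _ _)
        · exact (hs r hr).weaken (Set.subset_insert _ _)
  | cimpE _ _ ih1 ih2 =>
      refine .cimpE (ih1 hs) (ih2 ?_)
      rintro r (rfl | hr)
      · exact .ax (Set.mem_insert _ _)
      · exact (hs r hr).weaken (Set.subset_insert _ _)

lemma conj_intro {Γ : Set (PCLForm A)} {X : Finset A}
    (h : ∀ x ∈ X, PCLProves Γ (.atom x)) : PCLProves Γ (conjOf X) := by
  have : ∀ l : List A, (∀ x ∈ l, PCLProves Γ (.atom x)) →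
      PCLProves Γ (l.foldr (fun x f => .and (.atom x) f) .top) := by
    intro l
    induction l with
    | nil => intro _; exact .topI
    | cons y l ih =>
        intro hl
        exact .andI (hl y List.mem_cons_self) (ih fun x hx => hl x (List.mem_cons_of_mem _ hx))
  exact this X.toList fun x hx => h x (Finset.mem_toList.1 hx)

lemma conjOf_empty : (conjOf (∅ : Finset A)) = .top := by simp [conjOf]

lemma trace_sound [DecidableEq A] {Δ : Set (HornClause A)} {σ : List A}
    (h : Trace Δ σ) : ∀ a ∈ σ, PCLProves (HornClause.toForm '' Δ) (.atom a) := by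
  induction h with
  | nil => intro a ha; simp at ha
  | @imp Δ X b σ₀ hc _ hX ih =>
      intro a ha
      rcases List.mem_append.1 (mem_rdedup.1 ha) with h | h
      · exact ih a h
      · have hb : a = b := by simpa using h
        subst hb
        have hcl : PCLProves (HornClause.toForm '' Δ) (.imp (conjOf X) (.atom a)) := by
          have : HornClause.toForm ⟨X, false, a⟩ = .imp (conjOf X) (.atom a) := by
            simp [HornClause.toForm]
          exact this ▸ .ax (Set.mem_image_of_mem _ hc)
        exact .impE hcl (conj_intro fun x hx => ih x (hX x hx))
  | @cimp Δ X b σ₀ u v hc _ hX he ih =>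
      have himg : HornClause.toForm '' (insert (⟨∅, false, b⟩ : HornClause A) Δ)
          = insert (.imp .top (.atom b)) (HornClause.toForm '' Δ) := by
        rw [Set.image_insert_eq]
        congr 1
        simp [HornClause.toForm, conjOf_empty]
      have hb : PCLProves (HornClause.toForm '' Δ) (.atom b) := by
        have hcl : PCLProves (HornClause.toForm '' Δ) (.cimp (conjOf X) (.atom b)) := by
          have : HornClause.toForm ⟨X, true, b⟩ = .cimp (conjOf X) (.atom b) := by
            simp [HornClause.toForm]
          exact this ▸ .ax (Set.mem_image_of_mem _ hc)
        refine .cimpE hcl (conj_intro fun x hx => ?_)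
        have h1 : PCLProves (HornClause.toForm '' (insert (⟨∅, false, b⟩ : HornClause A) Δ))
            (.atom x) := ih x (hX x hx)
        rw [himg] at h1
        refine h1.subst ?_
        rintro r (rfl | hr)
        · exact .impI (.ax (Set.mem_insert_iff.2 (Or.inr (Set.mem_insert _ _))))
        · exact .ax (Set.subset_insert _ _ hr)
      intro a ha
      rcases List.mem_append.1 (mem_rdedup.1 ha) with h | h
      · have h1 := ih a (he ▸ List.mem_append_left v h)
        rw [himg] at h1
        refine h1.subst ?_
        rintro r (rfl | hr)
        · exact .impI (hb.weaken (Set.subset_insert _ _))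
        · exact .ax hr
      · rcases List.mem_cons.1 h with rfl | h
        · exact hb
        · have h1 := ih a (he ▸ List.mem_append_right u h)
          rw [himg] at h1
          refine h1.subst ?_
          rintro r (rfl | hr)
          · exact .impI (hb.weaken (Set.subset_insert _ _))
          · exact .ax hr

end PCLLemmas

section Semantics
variable {A : Type} [DecidableEq A]

/-- Kripke-style forcing over worlds = Horn theories. -/
def Force : PCLForm A → Set (HornClause A) → Prop
  | .atom a, w => ∃ σ, Trace w σ ∧ a ∈ σ
  | .top, _ => True
  | .and p q, w => Force p w ∧ Force q w
  | .imp p q, w => ∀ w', w ⊆ w' → Force p w' → Force q w'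
  | .cimp p q, w => ∀ w', w ⊆ w' →
      (∀ w'', w' ⊆ w'' → Force q w'' → Force p w'') → Force q w'

lemma Force.mono {p : PCLForm A} {w w' : Set (HornClause A)}
    (h : Force p w) (hw : w ⊆ w') : Force p w' := by
  induction p generalizing w w' with
  | atom a => obtain ⟨σ, hσ, ha⟩ := h; exact ⟨σ, hσ.mono hw, ha⟩
  | top => trivial
  | and p q ihp ihq => exact ⟨ihp h.1 hw, ihq h.2 hw⟩
  | imp p q ihp ihq => exact fun w'' hw'' hp => h w'' (hw.trans hw'') hp
  | cimp p q ihp ihq => exact fun w'' hw'' H => h w'' (hw.trans hw'') H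

lemma force_sound {Γ : Set (PCLForm A)} {p : PCLForm A} (h : PCLProves Γ p) :
    ∀ w : Set (HornClause A), (∀ r ∈ Γ, Force r w) → Force p w := by
  induction h with
  | ax hp => exact fun w hw => hw _ hp
  | topI => exact fun _ _ => trivial
  | andI _ _ ih1 ih2 => exact fun w hw => ⟨ih1 w hw, ih2 w hw⟩
  | andE1 _ ih => exact fun w hw => (ih w hw).1
  | andE2 _ ih => exact fun w hw => (ih w hw).2
  | impI _ ih =>
      intro w hw w' hww' hp
      refine ih w' ?_
      rintro r (rfl | hr)
      · exact hp
      · exact (hw r hr).mono hww'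
  | impE _ _ ih1 ih2 =>
      exact fun w hw => ih1 w hw w (subset_refl w) (ih2 w hw)
  | cimpI1 _ ih =>
      exact fun w hw w' hww' _ => (ih w hw).mono hww'
  | @cimpI2 Γ p q p' q' _ _ _ ih1 ih2 ih3 =>
      intro w hw w' hww' H
      have hq' : Force q' w' := by
        refine ih1 w hw w' hww' ?_
        intro w'' hw'' hq''
        have hΓ'' : ∀ r ∈ Γ, Force r w'' := fun r hr => (hw r hr).mono (hww'.trans hw'')
        have hpq : Force (.cimp p q) w'' := by
          refine ih3 w'' ?_
          rintro r (rfl | hr)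
          · exact hq''
          · exact hΓ'' r hr
        have hq : Force q w'' :=
          hpq w'' (subset_refl _) (fun w₃ h₃ hq₃ => H w₃ (hw''.trans h₃) hq₃)
        have hp : Force p w'' := H w'' hw'' hq
        refine ih2 w'' ?_
        rintro r (rfl | hr)
        · exact hp
        · exact hΓ'' r hr
      have hpq : Force (.cimp p q) w' := by
        refine ih3 w' ?_
        rintro r (rfl | hr)
        · exact hq'
        · exact (hw r hr).mono hww'
      exact hpq w' (subset_refl _) H
  | @cimpE Γ p q _ _ ih1 ih2 =>
      intro w hw
      refine ih1 w hw w (subset_refl _) ?_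
      intro w'' hw'' hq
      refine ih2 w'' ?_
      rintro r (rfl | hr)
      · exact hq
      · exact (hw r hr).mono hw''

lemma force_conjOf {X : Finset A} {w : Set (HornClause A)} :
    Force (conjOf X) w ↔ ∀ x ∈ X, Force (.atom x) w := by
  have : ∀ l : List A,
      Force (l.foldr (fun x f => PCLForm.and (.atom x) f) .top) w ↔
        ∀ x ∈ l, Force (.atom x) w := by
    intro l
    induction l with
    | nil => simp [Force]
    | cons y l ih =>
        simp only [List.foldr_cons, List.mem_cons]
        constructor
        · rintro ⟨h1, h2⟩ x (rfl | hx)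
          · exact h1
          · exact (ih.1 h2) x hx
        · intro h
          exact ⟨h y (Or.inl rfl), ih.2 fun x hx => h x (Or.inr hx)⟩
  rw [conjOf, this]
  simp [Finset.mem_toList]

lemma merge_finset {w : Set (HornClause A)} {X : Finset A}
    (h : ∀ x ∈ X, ∃ σ, Trace w σ ∧ x ∈ σ) :
    ∃ σ, Trace w σ ∧ ∀ x ∈ X, x ∈ σ := by
  classical
  induction X using Finset.induction_on with
  | empty => exact ⟨[], Trace.nil, by simp⟩
  | @insert y X hy ih =>
      obtain ⟨σ, hσ, hXσ⟩ := ih fun x hx => h x (Finset.mem_insert_of_mem hx)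
      obtain ⟨τ, hτ, hyτ⟩ := h y (Finset.mem_insert_self _ _)
      refine ⟨rdedup (σ ++ τ), hσ.merge hτ, ?_⟩
      intro x hx
      rcases Finset.mem_insert.1 hx with rfl | hx
      · exact mem_rdedup.2 (List.mem_append_right _ hyτ)
      · exact mem_rdedup.2 (List.mem_append_left _ (hXσ x hx))

lemma clause_valid {Δ : Set (HornClause A)} {c : HornClause A} (hc : c ∈ Δ) :
    Force (HornClause.toForm c) Δ := by
  obtain ⟨X, ctr, a⟩ := c
  cases ctr with
  | false =>
      show Force (.imp (conjOf X) (.atom a)) Δ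
      intro w' hw hconj
      obtain ⟨σ, hσ, hXσ⟩ := merge_finset (force_conjOf.1 hconj)
      exact ⟨rdedup (σ ++ [a]), Trace.imp (hw hc) hσ hXσ, mem_rdedup.2 (by simp)⟩
  | true =>
      show Force (.cimp (conjOf X) (.atom a)) Δ
      intro w' hw H
      set w'' : Set (HornClause A) := insert (⟨∅, false, a⟩ : HornClause A) w' with hw''def
      have ha'' : Force (.atom a) w'' := by
        refine ⟨rdedup ([] ++ [a]), ?_, by simp [rdedup]⟩
        exact Trace.imp (Set.mem_insert _ _) Trace.nil (by simp)
      have hconj := H w'' (Set.subset_insert _ _) ha''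
      obtain ⟨σ, hσ, hXσ⟩ := merge_finset (force_conjOf.1 hconj)
      refine ⟨rdedup (σ ++ a :: []), Trace.cimp (hw hc) ?_ hXσ (List.append_nil σ).symm,
        mem_rdedup.2 (by simp)⟩
      exact hσ

end Semantics

/-- for a Horn PCL theory Δ and an atom a,
Δ ⊢ a in PCL natural deduction iff a occurs in some proof trace of Δ. -/
theorem provable_iff_in_trace {A : Type} [DecidableEq A]
    (Δ : Set (HornClause A)) (a : A) :
    PCLProves (HornClause.toForm '' Δ) (.atom a) ↔ ∃ σ, Trace Δ σ ∧ a ∈ σ := by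
  constructor
  · intro h
    have := force_sound h Δ ?_
    · exact this
    · rintro r ⟨c, hc, rfl⟩
      exact clause_valid hc
  · rintro ⟨σ, hσ, ha⟩
    exact trace_sound hσ a ha
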